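/- Let g satisfy (G1)–(G3), fix H with ‖H‖_{2,col} ≤ B, and let (ρ_t)_{t∈[0,1]} be Borel probability measures on ℝ^p, each supported in {β : ‖β‖ ≤ r} and C_ρ-Lipschitz in the bounded-Lipschitz norm. Let T(H,·) be the solution of d/dt T(t) = ∫ g(T(t),β) dρ_t(β), T(0) = H, and let T̃ be the explicit Euler scheme on the grid t_l = l/L: T̃(0) = H, T̃(t_{l+1}) = T̃(t_l) + (1/L)·∫ g(T̃(t_l),β) dρ_{t_l}(β). Then there exists a constant C, depending only on N, D, r, B, C_ρ and the constants in (G1)–(G3), such that max_{0≤l≤L} ‖T̃(t_l) − T(H,t_l)‖_F ≤ C/L. (In particular, the first-order Euler rate O(1/L) holds without assuming any bound on the second time-derivative of T, only the bounded-Lipschitz continuity of t ↦ ρ_t.) -/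

import Mathlib

open MeasureTheory Set

set_option maxHeartbeats 1000000

noncomputable section

/-- `D × (N+1)` real matrices, with the Frobenius (Euclidean) norm. -/
abbrev Mat (D N : ℕ) : Type := EuclideanSpace ℝ (Fin D × Fin (N + 1))

/-- Parameter space `ℝ^p` with the Euclidean norm. -/
abbrev Par (p : ℕ) : Type := EuclideanSpace ℝ (Fin p)

/-- The `j`-th column of a matrix, as a Euclidean vector. -/
noncomputable def matCol {D N : ℕ} (Z : Mat D N) (j : Fin (N + 1)) :
    EuclideanSpace ℝ (Fin D) :=
  (WithLp.equiv 2 (Fin D → ℝ)).symm fun i => Z (i, j)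

/-- Maximum ℓ²-norm of a column: `‖Z‖_{2,col}`. -/
noncomputable def colNorm {D N : ℕ} (Z : Mat D N) : ℝ :=
  ⨆ j : Fin (N + 1), ‖matCol Z j‖

/-- A family of measures `(ρ_t)` is `Cρ`-Lipschitz in the bounded-Lipschitz norm on `[0,1]`. -/
def BLLipschitz {α : Type*} [PseudoMetricSpace α] [MeasurableSpace α]
    (ρ : ℝ → Measure α) (Cρ : ℝ) : Prop :=
  ∀ φ : α → ℝ, (∀ x, |φ x| ≤ 1) → LipschitzWith 1 φ →
    ∀ s ∈ Icc (0 : ℝ) 1, ∀ t ∈ Icc (0 : ℝ) 1,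
      |(∫ x, φ x ∂(ρ t)) - ∫ x, φ x ∂(ρ s)| ≤ Cρ * |t - s|

/-- The explicit Euler discretization of the mean-field Transformer ODE. -/
noncomputable def eulerT {D N p : ℕ} (g : Mat D N → Par p → Mat D N)
    (ρ : ℝ → Measure (Par p)) (L : ℕ) (H : Mat D N) : ℕ → Mat D N
  | 0 => H
  | l + 1 =>
    eulerT g ρ L H l + (L : ℝ)⁻¹ • ∫ β, g (eulerT g ρ L H l) β ∂(ρ ((l : ℝ) / L))

variable {D N : ℕ}

lemma matCol_apply (Z : Mat D N) (j : Fin (N+1)) (i : Fin D) : matCol Z j i = Z (i,j) := rfl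

lemma matCol_add (X Y : Mat D N) (j : Fin (N+1)) : matCol (X + Y) j = matCol X j + matCol Y j := by
  ext i; simp [matCol_apply]

lemma matCol_sub (X Y : Mat D N) (j : Fin (N+1)) : matCol (X - Y) j = matCol X j - matCol Y j := by
  ext i; simp [matCol_apply]

lemma matCol_smul (c : ℝ) (X : Mat D N) (j : Fin (N+1)) : matCol (c • X) j = c • matCol X j := by
  ext i; simp [matCol_apply]

lemma matCol_zero (j : Fin (N+1)) : matCol (0 : Mat D N) j = 0 := by
  ext i; simp [matCol_apply]

lemma norm_matCol_le (Z : Mat D N) (j : Fin (N+1)) : ‖matCol Z j‖ ≤ ‖Z‖ := by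
  rw [EuclideanSpace.norm_eq, EuclideanSpace.norm_eq]
  apply Real.sqrt_le_sqrt
  calc ∑ i : Fin D, ‖matCol Z j i‖^2 = ∑ i : Fin D, ‖Z (i,j)‖^2 := rfl
    _ ≤ ∑ i : Fin D, ∑ j' : Fin (N+1), ‖Z (i,j')‖^2 := by
        apply Finset.sum_le_sum; intro i _
        exact Finset.single_le_sum (f := fun j' => ‖Z (i,j')‖^2) (fun j' _ => by positivity) (Finset.mem_univ j)
    _ = ∑ x : Fin D × Fin (N+1), ‖Z x‖^2 := by rw [Fintype.sum_prod_type]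

lemma colNorm_nonneg (Z : Mat D N) : 0 ≤ colNorm Z := by
  have : ‖matCol Z 0‖ ≤ colNorm Z := le_ciSup (f := fun j => ‖matCol Z j‖) (Finite.bddAbove_range _) 0
  exact le_trans (norm_nonneg _) this

lemma colNorm_le_iff {Z : Mat D N} {C : ℝ} (h : ∀ j, ‖matCol Z j‖ ≤ C) : colNorm Z ≤ C :=
  ciSup_le h

lemma norm_matCol_le_colNorm (Z : Mat D N) (j : Fin (N+1)) : ‖matCol Z j‖ ≤ colNorm Z :=
  le_ciSup (f := fun j => ‖matCol Z j‖) (Finite.bddAbove_range _) j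

lemma colNorm_le_norm (Z : Mat D N) : colNorm Z ≤ ‖Z‖ := colNorm_le_iff (norm_matCol_le Z)

lemma norm_le_sqrt_colNorm (Z : Mat D N) : ‖Z‖ ≤ Real.sqrt (N+1) * colNorm Z := by
  rw [EuclideanSpace.norm_eq, ← Real.sqrt_sq (colNorm_nonneg Z), ← Real.sqrt_mul (by positivity)]
  apply Real.sqrt_le_sqrt
  calc ∑ x : Fin D × Fin (N+1), ‖Z x‖^2
      = ∑ j : Fin (N+1), ∑ i : Fin D, ‖Z (i,j)‖^2 := by
        rw [Fintype.sum_prod_type, Finset.sum_comm]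
    _ ≤ ∑ j : Fin (N+1), (colNorm Z)^2 := by
        apply Finset.sum_le_sum; intro j _
        have h1 : ∑ i : Fin D, ‖Z (i,j)‖^2 = ‖matCol Z j‖^2 := by
          rw [EuclideanSpace.norm_eq, Real.sq_sqrt (by positivity)]
          simp [matCol_apply]
        rw [h1]
        exact pow_le_pow_left₀ (norm_nonneg _) (norm_matCol_le_colNorm Z j) 2
    _ = (N+1) * (colNorm Z)^2 := by simp

lemma colNorm_add_le (X Y : Mat D N) : colNorm (X + Y) ≤ colNorm X + colNorm Y := by
  apply colNorm_le_iff; intro j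
  rw [matCol_add]
  exact le_trans (norm_add_le _ _)
    (add_le_add (norm_matCol_le_colNorm X j) (norm_matCol_le_colNorm Y j))

lemma colNorm_smul_le (c : ℝ) (X : Mat D N) : colNorm (c • X) ≤ |c| * colNorm X := by
  apply colNorm_le_iff; intro j
  rw [matCol_smul, norm_smul, Real.norm_eq_abs]
  exact mul_le_mul_of_nonneg_left (norm_matCol_le_colNorm X j) (abs_nonneg c)

lemma abs_coord_le_norm {ι : Type*} [Fintype ι] (v : EuclideanSpace ℝ ι) (k : ι) :
    |v k| ≤ ‖v‖ := by
  rw [EuclideanSpace.norm_eq, ← Real.sqrt_sq (abs_nonneg (v k))]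
  apply Real.sqrt_le_sqrt
  rw [sq_abs]
  have : ‖v k‖^2 = v k ^ 2 := by rw [Real.norm_eq_abs, sq_abs]
  rw [← this]
  exact Finset.single_le_sum (f := fun i => ‖v i‖^2) (fun i _ => by positivity) (Finset.mem_univ k)

lemma norm_le_card_mul_of_coords {ι : Type*} [Fintype ι] (v : EuclideanSpace ℝ ι) {b : ℝ}
    (hb : 0 ≤ b) (h : ∀ k, |v k| ≤ b) : ‖v‖ ≤ Real.sqrt (Fintype.card ι) * b := by
  rw [EuclideanSpace.norm_eq, ← Real.sqrt_sq hb, ← Real.sqrt_mul (by positivity)]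
  apply Real.sqrt_le_sqrt
  calc ∑ i, ‖v i‖^2 ≤ ∑ _i : ι, b^2 := by
        apply Finset.sum_le_sum; intro i _
        rw [Real.norm_eq_abs]
        exact pow_le_pow_left₀ (abs_nonneg _) (h i) 2
    _ = (Fintype.card ι) * b^2 := by rw [Finset.sum_const, nsmul_eq_mul]; rfl

/-- `matCol` as a continuous linear map. -/
def matColL (j : Fin (N+1)) : Mat D N →L[ℝ] EuclideanSpace ℝ (Fin D) :=
  LinearMap.toContinuousLinearMap
    { toFun := fun Z => matCol Z j
      map_add' := fun X Y => matCol_add X Y j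
      map_smul' := fun c X => matCol_smul c X j }

lemma matColL_apply (j : Fin (N+1)) (Z : Mat D N) : matColL (D := D) j Z = matCol Z j := rfl

lemma colNorm_integral_le {p : ℕ} {μ : Measure (Par p)} [IsProbabilityMeasure μ]
    {f : Par p → Mat D N} {C : ℝ} (hC : 0 ≤ C) (h : ∀ᵐ β ∂μ, colNorm (f β) ≤ C) :
    colNorm (∫ β, f β ∂μ) ≤ C := by
  by_cases hi : Integrable f μ
  · apply colNorm_le_iff; intro j
    have : matCol (∫ β, f β ∂μ) j = ∫ β, matCol (f β) j ∂μ := by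
      rw [← matColL_apply]
      exact (ContinuousLinearMap.integral_comp_comm (matColL j) hi).symm
    rw [this]
    have := norm_integral_le_of_norm_le_const (μ := μ) (f := fun β => matCol (f β) j) (C := C) ?_
    · simpa using this
    · filter_upwards [h] with β hβ
      exact le_trans (norm_matCol_le_colNorm _ j) hβ
  · rw [integral_undef hi]
    simpa using le_trans (colNorm_le_norm (0 : Mat D N)) (by simp [hC])

section G
variable {p : ℕ} {g : Mat D N → Par p → Mat D N} {K r R : ℝ} {φP φT : ℝ → ℝ}

lemma diff_g_left (hg : Differentiable ℝ fun z : Mat D N × Par p => g z.1 z.2) (β : Par p) :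
    Differentiable ℝ (fun T' => g T' β) :=
  hg.comp (differentiable_id.prodMk (differentiable_const β))

lemma diff_g_right (hg : Differentiable ℝ fun z : Mat D N × Par p => g z.1 z.2) (A : Mat D N) :
    Differentiable ℝ (fun β' => g A β') :=
  hg.comp ((differentiable_const A).prodMk differentiable_id)

/-- (G1) plus the support bound gives a norm bound for `g`. -/
lemma g_norm_bound (hK : 0 ≤ K) (hr : 0 ≤ r)
    (hG1 : ∀ (T : Mat D N) (β : Par p),
      colNorm (g T β) ≤ K * colNorm T * (1 + ‖β‖ + ‖β‖ ^ 2))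
    (A : Mat D N) {β : Par p} (hβ : ‖β‖ ≤ r) :
    colNorm (g A β) ≤ K * colNorm A * (1 + r + r ^ 2) := by
  refine le_trans (hG1 A β) ?_
  have h1 : (1 : ℝ) + ‖β‖ + ‖β‖^2 ≤ 1 + r + r^2 := by
    have := norm_nonneg β
    have h2 : ‖β‖^2 ≤ r^2 := pow_le_pow_left₀ (norm_nonneg β) hβ 2
    linarith
  have h0 : 0 ≤ K * colNorm A := mul_nonneg hK (colNorm_nonneg A)
  exact mul_le_mul_of_nonneg_left h1 h0

/-- Frobenius-norm version of the `g` bound. -/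
lemma g_frob_bound (hK : 0 ≤ K) (hr : 0 ≤ r)
    (hG1 : ∀ (T : Mat D N) (β : Par p),
      colNorm (g T β) ≤ K * colNorm T * (1 + ‖β‖ + ‖β‖ ^ 2))
    (A : Mat D N) {β : Par p} (hβ : ‖β‖ ≤ r) :
    ‖g A β‖ ≤ Real.sqrt (N + 1) * (K * (1 + r + r ^ 2)) * ‖A‖ := by
  refine le_trans (norm_le_sqrt_colNorm _) ?_
  have h1 := g_norm_bound hK hr hG1 A hβ
  have h2 : K * colNorm A * (1 + r + r^2) ≤ K * (1 + r + r^2) * ‖A‖ := by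
    have hM : (0:ℝ) ≤ 1 + r + r^2 := by positivity
    have h5 := mul_le_mul_of_nonneg_left (colNorm_le_norm A) (mul_nonneg hK hM)
    nlinarith [h5]
  have hs : (0:ℝ) ≤ Real.sqrt (N+1) := Real.sqrt_nonneg _
  calc Real.sqrt (N+1) * colNorm (g A β) ≤ Real.sqrt (N+1) * (K * (1+r+r^2) * ‖A‖) := by
        apply mul_le_mul_of_nonneg_left (le_trans h1 h2) hs
    _ = Real.sqrt (N+1) * (K * (1+r+r^2)) * ‖A‖ := by ring

/-- Lipschitz bound in the matrix variable, on a ball of radius `R`. -/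
lemma g_lip_left (hr : 0 ≤ r) (hR : 0 ≤ R)
    (hg : Differentiable ℝ fun z : Mat D N × Par p => g z.1 z.2)
    (hφT : Monotone φT)
    (hG3 : ∀ (T : Mat D N) (β : Par p),
      ‖fderiv ℝ (fun T' => g T' β) T‖ ≤ φT ‖T‖ * (1 + ‖β‖ + ‖β‖ ^ 2))
    {A A' : Mat D N} (hA : ‖A‖ ≤ R) (hA' : ‖A'‖ ≤ R) {β : Par p} (hβ : ‖β‖ ≤ r) :
    ‖g A β - g A' β‖ ≤ max (φT R) 0 * (1 + r + r ^ 2) * ‖A - A'‖ := by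
  apply Convex.norm_image_sub_le_of_norm_fderiv_le (𝕜 := ℝ)
    (f := fun T' => g T' β) (s := Metric.closedBall (0 : Mat D N) R)
  · intro x _; exact (diff_g_left hg β) x
  · intro x hx
    rw [Metric.mem_closedBall, dist_zero_right] at hx
    refine le_trans (hG3 x β) ?_
    have h1 : φT ‖x‖ ≤ max (φT R) 0 := le_trans (hφT hx) (le_max_left _ _)
    have h2 : (1:ℝ) + ‖β‖ + ‖β‖^2 ≤ 1 + r + r^2 := by
      have h3 : ‖β‖^2 ≤ r^2 := pow_le_pow_left₀ (norm_nonneg β) hβ 2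
      have := norm_nonneg β; linarith
    have h4 : (0:ℝ) ≤ 1 + ‖β‖ + ‖β‖^2 := by positivity
    calc φT ‖x‖ * (1 + ‖β‖ + ‖β‖^2) ≤ max (φT R) 0 * (1 + ‖β‖ + ‖β‖^2) :=
          mul_le_mul_of_nonneg_right h1 h4
      _ ≤ max (φT R) 0 * (1 + r + r^2) :=
          mul_le_mul_of_nonneg_left h2 (le_max_right _ _)
  · exact convex_closedBall _ _
  · simpa [Metric.mem_closedBall, dist_zero_right] using hA'
  · simpa [Metric.mem_closedBall, dist_zero_right] using hA

/-- Lipschitz bound in the parameter variable for a single coordinate, on the ball of radius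
`r`. -/
lemma g_coord_lip (hr : 0 ≤ r)
    (hg : Differentiable ℝ fun z : Mat D N × Par p => g z.1 z.2)
    (hφP : Monotone φP)
    (hG2 : ∀ (T : Mat D N) (β : Par p) (i : Fin (N + 1)),
      ‖fderiv ℝ (fun β' => matCol (g T β') i) β‖ ≤ φP (colNorm T) * (1 + ‖β‖))
    {A : Mat D N} (hA : colNorm A ≤ R) (k : Fin D × Fin (N+1))
    {β β' : Par p} (hβ : ‖β‖ ≤ r) (hβ' : ‖β'‖ ≤ r) :
    |g A β k - g A β' k| ≤ max (φP R) 0 * (1 + r) * ‖β - β'‖ := by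
  have key : ‖matCol (g A β) k.2 - matCol (g A β') k.2‖ ≤ max (φP R) 0 * (1 + r) * ‖β - β'‖ := by
    apply Convex.norm_image_sub_le_of_norm_fderiv_le (𝕜 := ℝ)
      (f := fun β' => matCol (g A β') k.2) (s := Metric.closedBall (0 : Par p) r)
    · intro x _
      exact ((matColL k.2).differentiable.comp (diff_g_right hg A)) x
    · intro x hx
      rw [Metric.mem_closedBall, dist_zero_right] at hx
      refine le_trans (hG2 A x k.2) ?_
      have h1 : φP (colNorm A) ≤ max (φP R) 0 := le_trans (hφP hA) (le_max_left _ _)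
      calc φP (colNorm A) * (1 + ‖x‖) ≤ max (φP R) 0 * (1 + ‖x‖) :=
            mul_le_mul_of_nonneg_right h1 (by positivity)
        _ ≤ max (φP R) 0 * (1 + r) :=
            mul_le_mul_of_nonneg_left (by linarith) (le_max_right _ _)
    · exact convex_closedBall _ _
    · simpa [Metric.mem_closedBall, dist_zero_right] using hβ'
    · simpa [Metric.mem_closedBall, dist_zero_right] using hβ
  have coord : g A β k - g A β' k = (matCol (g A β) k.2 - matCol (g A β') k.2) k.1 := by
    simp [matCol_apply]
  rw [coord]
  exact le_trans (abs_coord_le_norm _ _) key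

end G

section Integrals
variable {p : ℕ} {g : Mat D N → Par p → Mat D N} {K r R Cρ : ℝ} {φP φT : ℝ → ℝ}

lemma ae_ball_of_null {μ : Measure (Par p)} (h : μ {β : Par p | r < ‖β‖} = 0) :
    ∀ᵐ β ∂μ, ‖β‖ ≤ r := by
  rw [ae_iff]
  convert h using 2
  ext β; simp [not_le]

lemma integrable_g (hg : Differentiable ℝ fun z : Mat D N × Par p => g z.1 z.2)
    (hK : 0 ≤ K) (hr : 0 ≤ r)
    (hG1 : ∀ (T : Mat D N) (β : Par p),
      colNorm (g T β) ≤ K * colNorm T * (1 + ‖β‖ + ‖β‖ ^ 2))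
    (A : Mat D N) {μ : Measure (Par p)} [IsProbabilityMeasure μ]
    (hμ : μ {β : Par p | r < ‖β‖} = 0) :
    Integrable (fun β => g A β) μ := by
  refine ⟨(Continuous.aestronglyMeasurable ?_), ?_⟩
  · exact hg.continuous.comp (continuous_const.prodMk continuous_id)
  · apply HasFiniteIntegral.of_bounded (C := Real.sqrt (N+1) * (K * (1 + r + r^2)) * ‖A‖)
    filter_upwards [ae_ball_of_null hμ] with β hβ
    exact g_frob_bound hK hr hG1 A hβ

lemma integral_g_lip (hg : Differentiable ℝ fun z : Mat D N × Par p => g z.1 z.2)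
    (hK : 0 ≤ K) (hr : 0 ≤ r) (hR : 0 ≤ R)
    (hφT : Monotone φT)
    (hG1 : ∀ (T : Mat D N) (β : Par p),
      colNorm (g T β) ≤ K * colNorm T * (1 + ‖β‖ + ‖β‖ ^ 2))
    (hG3 : ∀ (T : Mat D N) (β : Par p),
      ‖fderiv ℝ (fun T' => g T' β) T‖ ≤ φT ‖T‖ * (1 + ‖β‖ + ‖β‖ ^ 2))
    {A A' : Mat D N} (hA : ‖A‖ ≤ R) (hA' : ‖A'‖ ≤ R)
    {μ : Measure (Par p)} [IsProbabilityMeasure μ]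
    (hμ : μ {β : Par p | r < ‖β‖} = 0) :
    ‖(∫ β, g A β ∂μ) - ∫ β, g A' β ∂μ‖ ≤ max (φT R) 0 * (1 + r + r^2) * ‖A - A'‖ := by
  rw [← integral_sub (integrable_g hg hK hr hG1 A hμ) (integrable_g hg hK hr hG1 A' hμ)]
  have key := norm_integral_le_of_norm_le_const (μ := μ)
    (f := fun β => g A β - g A' β) (C := max (φT R) 0 * (1 + r + r^2) * ‖A - A'‖) ?_
  · simpa using key
  · filter_upwards [ae_ball_of_null hμ] with β hβ
    exact g_lip_left hr hR hg hφT hG3 hA hA' hβ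

/-- The BL-Lipschitz continuity of `t ↦ ρ_t` controls the variation of `∫ g(A,β) dρ_t` in `t`. -/
lemma integral_g_BL (hg : Differentiable ℝ fun z : Mat D N × Par p => g z.1 z.2)
    (hK : 0 ≤ K) (hr : 0 ≤ r) (hR : 0 ≤ R) (hCρ : 0 ≤ Cρ)
    (hφP : Monotone φP)
    (hG1 : ∀ (T : Mat D N) (β : Par p),
      colNorm (g T β) ≤ K * colNorm T * (1 + ‖β‖ + ‖β‖ ^ 2))
    (hG2 : ∀ (T : Mat D N) (β : Par p) (i : Fin (N + 1)),
      ‖fderiv ℝ (fun β' => matCol (g T β') i) β‖ ≤ φP (colNorm T) * (1 + ‖β‖))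
    {A : Mat D N} (hA : ‖A‖ ≤ R)
    (ρ : ℝ → Measure (Par p)) [∀ t, IsProbabilityMeasure (ρ t)]
    (hsupp : ∀ t ∈ Icc (0 : ℝ) 1, ρ t {β : Par p | r < ‖β‖} = 0)
    (hBL : BLLipschitz ρ Cρ)
    {s t : ℝ} (hs : s ∈ Icc (0:ℝ) 1) (ht : t ∈ Icc (0:ℝ) 1) :
    ‖(∫ β, g A β ∂(ρ t)) - ∫ β, g A β ∂(ρ s)‖ ≤
      Real.sqrt (Fintype.card (Fin D × Fin (N+1))) *
        (max (max (K * R * (1 + r + r^2)) (max (φP R) 0 * (1 + r))) 1 * Cρ) * |t - s| := by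
  set S1 : ℝ := K * R * (1 + r + r^2) with hS1
  set SP : ℝ := max (φP R) 0 * (1 + r) with hSP
  set S : ℝ := max (max S1 SP) 1 with hS
  have hS1n : 0 ≤ S1 := by positivity
  have hSPn : 0 ≤ SP := by positivity
  have hSpos : 0 < S := lt_of_lt_of_le one_pos (le_max_right _ _)
  -- coordinatewise estimate
  have coord : ∀ k : Fin D × Fin (N+1),
      |((∫ β, g A β ∂(ρ t)) - ∫ β, g A β ∂(ρ s)) k| ≤ S * Cρ * |t - s| := by
    intro k
    set φ : Par p → ℝ := fun β => g A β k with hφ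
    -- φ is `SP`-Lipschitz on the closed ball of radius r
    have hLipOn : LipschitzOnWith SP.toNNReal φ (Metric.closedBall (0 : Par p) r) := by
      rw [lipschitzOnWith_iff_dist_le_mul]
      intro x hx y hy
      rw [Metric.mem_closedBall, dist_zero_right] at hx hy
      rw [Real.dist_eq, dist_eq_norm]
      rw [Real.coe_toNNReal _ hSPn]
      exact g_coord_lip hr hg hφP hG2 (le_trans (colNorm_le_norm A) hA) k hx hy
    obtain ⟨ψ, hψlip, hψeq⟩ := hLipOn.extend_real
    -- clamp the extension
    set ψ' : Par p → ℝ := fun x => max (-S1) (min S1 (ψ x)) with hψ'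
    have hψ'bdd : ∀ x, |ψ' x| ≤ S1 := by
      intro x
      rw [abs_le]
      constructor
      · exact le_max_left _ _
      · exact max_le (by linarith) (min_le_left _ _)
    have hψ'lip : ∀ x y, |ψ' x - ψ' y| ≤ SP * ‖x - y‖ := by
      intro x y
      have h1 : |ψ' x - ψ' y| ≤ |min S1 (ψ x) - min S1 (ψ y)| := by
        simp only [hψ']
        rw [max_comm (-S1) (min S1 (ψ x)), max_comm (-S1) (min S1 (ψ y))]
        exact abs_max_sub_max_le_abs _ _ _
      have h2 : |min S1 (ψ x) - min S1 (ψ y)| ≤ |ψ x - ψ y| := by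
        have := abs_min_sub_min_le_max S1 (ψ x) S1 (ψ y)
        simpa using this
      have h3 : |ψ x - ψ y| ≤ SP * ‖x - y‖ := by
        have := hψlip.dist_le_mul x y
        rw [Real.dist_eq, dist_eq_norm, Real.coe_toNNReal _ hSPn] at this
        exact this
      linarith
    -- the normalized test function
    set χ : Par p → ℝ := fun x => S⁻¹ * ψ' x with hχ
    have hχbdd : ∀ x, |χ x| ≤ 1 := by
      intro x
      rw [abs_mul, abs_inv, abs_of_pos hSpos]
      rw [inv_mul_le_iff₀ hSpos, mul_one]
      exact le_trans (hψ'bdd x) (le_trans (le_max_left _ _) (le_max_left _ _))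
    have hχlip : LipschitzWith 1 χ := by
      apply LipschitzWith.of_dist_le_mul
      intro x y
      rw [Real.dist_eq, dist_eq_norm]
      have : |χ x - χ y| = S⁻¹ * |ψ' x - ψ' y| := by
        rw [hχ]; rw [← mul_sub, abs_mul, abs_inv, abs_of_pos hSpos]
      rw [this]
      have hSP_le : SP ≤ S := le_trans (le_max_right _ _) (le_max_left _ _)
      calc S⁻¹ * |ψ' x - ψ' y| ≤ S⁻¹ * (SP * ‖x - y‖) := by
            apply mul_le_mul_of_nonneg_left (hψ'lip x y) (by positivity)
        _ ≤ 1 * ‖x - y‖ := by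
            rw [inv_mul_le_iff₀ hSpos, one_mul]
            have : (0:ℝ) ≤ ‖x - y‖ := norm_nonneg _
            nlinarith
    have hBLχ := hBL χ hχbdd hχlip s hs t ht
    -- integrals of χ relate to integrals of φ
    have hae : ∀ u, u ∈ Icc (0:ℝ) 1 → (∫ x, χ x ∂(ρ u)) = S⁻¹ * ∫ β, φ β ∂(ρ u) := by
      intro u hu
      rw [hχ]
      rw [MeasureTheory.integral_const_mul]
      congr 1
      apply integral_congr_ae
      filter_upwards [ae_ball_of_null (hsupp u hu)] with β hβ
      have hmem : β ∈ Metric.closedBall (0 : Par p) r := by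
        rw [Metric.mem_closedBall, dist_zero_right]; exact hβ
      have h1 : ψ β = φ β := (hψeq hmem).symm
      have h2 : |φ β| ≤ S1 := by
        have : |g A β k| ≤ colNorm (g A β) := by
          have := abs_coord_le_norm (g A β) k
          have h3 : ‖matCol (g A β) k.2‖ ≤ colNorm (g A β) := norm_matCol_le_colNorm _ _
          have h4 : |g A β k| ≤ ‖matCol (g A β) k.2‖ := by
            have : g A β k = matCol (g A β) k.2 k.1 := by simp [matCol_apply]
            rw [this]
            exact abs_coord_le_norm _ _
          linarith
        have h5 := g_norm_bound hK hr hG1 A hβ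
        have h6 : K * colNorm A * (1+r+r^2) ≤ S1 := by
          rw [hS1]
          have hM : (0:ℝ) ≤ 1 + r + r^2 := by positivity
          have h7 := le_trans (colNorm_le_norm A) hA
          have h8 := mul_le_mul_of_nonneg_left h7 (mul_nonneg hK hM)
          nlinarith [h8]
        calc |φ β| ≤ colNorm (g A β) := this
          _ ≤ S1 := le_trans h5 h6
      show max (-S1) (min S1 (ψ β)) = φ β
      rw [h1, min_eq_right (abs_le.mp h2).2, max_eq_right (abs_le.mp h2).1]
    rw [hae t ht, hae s hs] at hBLχ
    -- coordinate of the vector integral is the scalar integral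
    have hcoordInt : ∀ u, u ∈ Icc (0:ℝ) 1 →
        (∫ β, g A β ∂(ρ u)) k = ∫ β, φ β ∂(ρ u) := by
      intro u hu
      have hint := integrable_g hg hK hr hG1 A (μ := ρ u) (hsupp u hu)
      have := (ContinuousLinearMap.integral_comp_comm (EuclideanSpace.proj k) hint).symm
      exact this
    have expand : ((∫ β, g A β ∂(ρ t)) - ∫ β, g A β ∂(ρ s)) k
        = (∫ β, φ β ∂(ρ t)) - ∫ β, φ β ∂(ρ s) := by
      have : ((∫ β, g A β ∂(ρ t)) - ∫ β, g A β ∂(ρ s)) k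
          = (∫ β, g A β ∂(ρ t)) k - (∫ β, g A β ∂(ρ s)) k := rfl
      rw [this, hcoordInt t ht, hcoordInt s hs]
    rw [expand]
    -- conclude
    have : |(∫ β, φ β ∂(ρ t)) - ∫ β, φ β ∂(ρ s)|
        = S * |S⁻¹ * (∫ β, φ β ∂(ρ t)) - S⁻¹ * (∫ β, φ β ∂(ρ s))| := by
      rw [← mul_sub, abs_mul, abs_inv, abs_of_pos hSpos, ← mul_assoc,
        mul_inv_cancel₀ (ne_of_gt hSpos), one_mul]
    rw [this]
    calc S * |S⁻¹ * (∫ β, φ β ∂(ρ t)) - S⁻¹ * (∫ β, φ β ∂(ρ s))|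
        ≤ S * (Cρ * |t - s|) := mul_le_mul_of_nonneg_left hBLχ (le_of_lt hSpos)
      _ = S * Cρ * |t - s| := by ring
  -- assemble coordinates
  have := norm_le_card_mul_of_coords (ι := Fin D × Fin (N+1))
    ((∫ β, g A β ∂(ρ t)) - ∫ β, g A β ∂(ρ s)) (b := S * Cρ * |t - s|) (by positivity) coord
  calc ‖(∫ β, g A β ∂(ρ t)) - ∫ β, g A β ∂(ρ s)‖
      ≤ Real.sqrt (Fintype.card (Fin D × Fin (N+1))) * (S * Cρ * |t - s|) := this
    _ = Real.sqrt (Fintype.card (Fin D × Fin (N+1))) * (S * Cρ) * |t - s| := by ring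

end Integrals

lemma pow_one_add_div_le_exp {x : ℝ} (hx : 0 ≤ x) {l L : ℕ} (hL : 0 < L) (hlL : l ≤ L) :
    (1 + x / L) ^ l ≤ Real.exp x := by
  have hL' : (0:ℝ) < L := by exact_mod_cast hL
  have h1 : (1 + x / L) ≤ Real.exp (x / L) := by
    have := Real.add_one_le_exp (x / L); linarith
  have h0 : (0:ℝ) ≤ 1 + x / L := by positivity
  calc (1 + x / L) ^ l ≤ (Real.exp (x / L)) ^ l := pow_le_pow_left₀ h0 h1 l
    _ = Real.exp (l * (x / L)) := by rw [← Real.exp_nat_mul]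
    _ ≤ Real.exp x := by
        apply Real.exp_le_exp.mpr
        have hcast : (l:ℝ) ≤ L := by exact_mod_cast hlL
        calc (l:ℝ) * (x / L) ≤ (L:ℝ) * (x / L) :=
              mul_le_mul_of_nonneg_right hcast (by positivity)
          _ = x := by field_simp

lemma one_le_sqrt_succ (N : ℕ) : (1:ℝ) ≤ Real.sqrt (N+1) := by
  nlinarith [Real.sq_sqrt (by positivity : (0:ℝ) ≤ (N:ℝ)+1), Real.sqrt_nonneg ((N:ℝ)+1),
    Nat.cast_nonneg (α := ℝ) N]


/-- first-order `O(1/L)` convergence of the explicit Euler scheme, assuming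
only bounded-Lipschitz continuity of `t ↦ ρ_t`. -/
theorem stmt14 (D N p : ℕ) (g : Mat D N → Par p → Mat D N)
    (K r Cρ B : ℝ) (φP φT : ℝ → ℝ)
    (hK : 0 < K) (hr : 0 < r) (hCρ : 0 ≤ Cρ) (hB : 0 < B)
    (hgdiff : Differentiable ℝ fun z : Mat D N × Par p => g z.1 z.2)
    (hφP : Continuous φP ∧ Monotone φP) (hφT : Continuous φT ∧ Monotone φT)
    (hG1 : ∀ (T : Mat D N) (β : Par p),
      colNorm (g T β) ≤ K * colNorm T * (1 + ‖β‖ + ‖β‖ ^ 2))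
    (hG2 : ∀ (T : Mat D N) (β : Par p) (i : Fin (N + 1)),
      ‖fderiv ℝ (fun β' => matCol (g T β') i) β‖ ≤ φP (colNorm T) * (1 + ‖β‖))
    (hG3 : ∀ (T : Mat D N) (β : Par p),
      ‖fderiv ℝ (fun T' => g T' β) T‖ ≤ φT ‖T‖ * (1 + ‖β‖ + ‖β‖ ^ 2)) :
    ∃ C : ℝ, 0 < C ∧
      ∀ (ρ : ℝ → Measure (Par p)) [∀ t, IsProbabilityMeasure (ρ t)],
        (∀ t ∈ Icc (0 : ℝ) 1, ρ t {β : Par p | r < ‖β‖} = 0) →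
        BLLipschitz ρ Cρ →
        ∀ H : Mat D N, colNorm H ≤ B →
        ∀ T : ℝ → Mat D N, T 0 = H →
          (∀ t ∈ Icc (0 : ℝ) 1,
            HasDerivWithinAt T (∫ β, g (T t) β ∂(ρ t)) (Icc (0 : ℝ) 1) t) →
          ∀ L : ℕ, 0 < L → ∀ l ≤ L,
            ‖eulerT g ρ L H l - T ((l : ℝ) / L)‖ ≤ C / L := by

  have hKn : (0:ℝ) ≤ K := hK.le
  have hrn : (0:ℝ) ≤ r := hr.le
  set M : ℝ := 1 + r + r ^ 2 with hMdef
  have hM0 : 0 < M := by positivity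
  have hsq1 : (1:ℝ) ≤ Real.sqrt (N+1) := one_le_sqrt_succ N
  have hsq0 : (0:ℝ) < Real.sqrt (N+1) := lt_of_lt_of_le one_pos hsq1
  set c1 : ℝ := Real.sqrt (N+1) * (K * M) with hc1def
  have hc1 : 0 < c1 := by positivity
  set R : ℝ := Real.sqrt (N+1) * B * Real.exp c1 with hRdef
  have hR : 0 < R := by positivity
  have hRn : 0 ≤ R := hR.le
  set Lg : ℝ := max (φT R) 0 * M with hLgdef
  have hLgn : 0 ≤ Lg := by positivity
  set SBL : ℝ := max (max (K * R * M) (max (φP R) 0 * (1 + r))) 1 with hSBLdef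
  set CBL : ℝ := Real.sqrt (Fintype.card (Fin D × Fin (N+1))) * (SBL * Cρ) with hCBLdef
  have hSBLn : (0:ℝ) ≤ SBL := le_trans zero_le_one (le_max_right _ _)
  have hCBLn : 0 ≤ CBL := by positivity
  set MF : ℝ := c1 * R with hMFdef
  have hMFn : 0 ≤ MF := by positivity
  set A0 : ℝ := Lg * MF + CBL with hA0def
  have hA0n : 0 ≤ A0 := by positivity
  refine ⟨A0 * Real.exp Lg + 1, by positivity, ?_⟩
  intro ρ hprob hsupp hBL H hH T hT0 hT L hL l hlL
  have hLpos : (0:ℝ) < L := by exact_mod_cast hL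
  have hLinv : (0:ℝ) ≤ (L:ℝ)⁻¹ := by positivity
  -- grid points lie in [0,1]
  have tmem : ∀ m : ℕ, m ≤ L → (m:ℝ)/L ∈ Icc (0:ℝ) 1 := by
    intro m hm
    constructor
    · positivity
    · rw [div_le_one hLpos]; exact_mod_cast hm
  -- the right-hand side of the ODE
  set F : ℝ → Mat D N := fun t => ∫ β, g (T t) β ∂(ρ t) with hFdef
  -- column norm bound along the Euler scheme
  have E1 : ∀ m : ℕ, m ≤ L → colNorm (eulerT g ρ L H m) ≤ B * (1 + K * M / L) ^ m := by
    intro m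
    induction m with
    | zero => intro _; simpa [eulerT] using hH
    | succ m ih =>
      intro hm1
      have hm : m ≤ L := le_of_lt (Nat.lt_of_succ_le hm1)
      have ihm := ih hm
      have hmem := tmem m hm
      have hcol : colNorm (∫ β, g (eulerT g ρ L H m) β ∂(ρ ((m:ℝ)/L)))
          ≤ K * colNorm (eulerT g ρ L H m) * M := by
        apply colNorm_integral_le (mul_nonneg (mul_nonneg hKn (colNorm_nonneg _)) hM0.le)
        filter_upwards [ae_ball_of_null (hsupp _ hmem)] with β hβ
        exact g_norm_bound hKn hrn hG1 _ hβ
      have step : colNorm (eulerT g ρ L H (m+1)) ≤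
          colNorm (eulerT g ρ L H m) + (L:ℝ)⁻¹ * (K * colNorm (eulerT g ρ L H m) * M) := by
        have hunfold : eulerT g ρ L H (m+1) = eulerT g ρ L H m
            + (L:ℝ)⁻¹ • ∫ β, g (eulerT g ρ L H m) β ∂(ρ ((m:ℝ)/L)) := rfl
        rw [hunfold]
        refine le_trans (colNorm_add_le _ _) ?_
        have hsm := colNorm_smul_le ((L:ℝ)⁻¹) (∫ β, g (eulerT g ρ L H m) β ∂(ρ ((m:ℝ)/L)))
        rw [abs_of_nonneg hLinv] at hsm
        have hsm2 := le_trans hsm (mul_le_mul_of_nonneg_left hcol hLinv)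
        linarith
      have hbase : (0:ℝ) ≤ 1 + K * M / L := by positivity
      have hpow : (0:ℝ) ≤ (1 + K * M / L)^m := by positivity
      calc colNorm (eulerT g ρ L H (m+1))
          ≤ colNorm (eulerT g ρ L H m) * (1 + (L:ℝ)⁻¹ * (K * M)) := by
            have hc := colNorm_nonneg (eulerT g ρ L H m)
            nlinarith [step]
        _ ≤ B * (1 + K * M / L)^m * (1 + (L:ℝ)⁻¹ * (K * M)) := by
            apply mul_le_mul_of_nonneg_right ihm (by positivity)
        _ = B * (1 + K * M / L)^(m+1) := by
            rw [pow_succ]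
            rw [div_eq_mul_inv, mul_comm (K*M) _]
            ring
  -- Frobenius norm bound along the Euler scheme
  have E2 : ∀ m : ℕ, m ≤ L → ‖eulerT g ρ L H m‖ ≤ R := by
    intro m hm
    have h1 := le_trans (norm_le_sqrt_colNorm _) (mul_le_mul_of_nonneg_left (E1 m hm) hsq0.le)
    have h2 : (1 + K * M / L)^m ≤ Real.exp (K * M) :=
      pow_one_add_div_le_exp (by positivity) hL hm
    have h3 : Real.exp (K * M) ≤ Real.exp c1 := by
      apply Real.exp_le_exp.mpr
      nlinarith [hsq1, hM0, hK]
    calc ‖eulerT g ρ L H m‖ ≤ Real.sqrt (N+1) * (B * (1 + K*M/L)^m) := h1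
      _ ≤ Real.sqrt (N+1) * (B * Real.exp c1) := by
          apply mul_le_mul_of_nonneg_left _ hsq0.le
          exact mul_le_mul_of_nonneg_left (le_trans h2 h3) hB.le
      _ = R := by rw [hRdef]; ring
  -- bound for F in terms of T
  have FB : ∀ t ∈ Icc (0:ℝ) 1, ‖F t‖ ≤ c1 * ‖T t‖ := by
    intro t ht
    have hcol : colNorm (F t) ≤ K * colNorm (T t) * M := by
      apply colNorm_integral_le (mul_nonneg (mul_nonneg hKn (colNorm_nonneg _)) hM0.le)
      filter_upwards [ae_ball_of_null (hsupp t ht)] with β hβ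
      exact g_norm_bound hKn hrn hG1 _ hβ
    have h2 : K * colNorm (T t) * M ≤ K * M * ‖T t‖ := by
      have := colNorm_le_norm (T t)
      nlinarith [colNorm_nonneg (T t), mul_le_mul_of_nonneg_left this (mul_nonneg hKn hM0.le)]
    calc ‖F t‖ ≤ Real.sqrt (N+1) * colNorm (F t) := norm_le_sqrt_colNorm _
      _ ≤ Real.sqrt (N+1) * (K * M * ‖T t‖) :=
          mul_le_mul_of_nonneg_left (le_trans hcol h2) hsq0.le
      _ = c1 * ‖T t‖ := by rw [hc1def]; ring
  -- a priori bound for the solution, via Grönwall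
  have TB : ∀ t ∈ Icc (0:ℝ) 1, ‖T t‖ ≤ R := by
    have hcont : ContinuousOn T (Icc 0 1) := fun t ht => (hT t ht).continuousWithinAt
    have hderiv : ∀ t ∈ Ico (0:ℝ) 1, HasDerivWithinAt T (F t) (Ici t) t := by
      intro t ht
      refine (hT t ⟨ht.1, ht.2.le⟩).mono_of_mem_nhdsWithin ?_
      rw [mem_nhdsWithin]
      exact ⟨Iio 1, isOpen_Iio, ht.2, fun x hx => ⟨le_trans ht.1 hx.2, hx.1.le⟩⟩
    have ha : ‖T 0‖ ≤ Real.sqrt (N+1) * B := by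
      rw [hT0]
      exact le_trans (norm_le_sqrt_colNorm H) (mul_le_mul_of_nonneg_left hH hsq0.le)
    have hbd : ∀ t ∈ Ico (0:ℝ) 1, ‖F t‖ ≤ c1 * ‖T t‖ + 0 := by
      intro t ht
      rw [add_zero]
      exact FB t ⟨ht.1, ht.2.le⟩
    have := norm_le_gronwallBound_of_norm_deriv_right_le hcont hderiv ha hbd
    intro t ht
    have h1 := this t ht
    rw [sub_zero, gronwallBound_ε0] at h1
    calc ‖T t‖ ≤ Real.sqrt (N+1) * B * Real.exp (c1 * t) := h1
      _ ≤ R := by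
          rw [hRdef]
          apply mul_le_mul_of_nonneg_left _ (by positivity)
          apply Real.exp_le_exp.mpr
          nlinarith [ht.1, ht.2, hc1]
  -- F is bounded by MF on [0,1]
  have FMF : ∀ t ∈ Icc (0:ℝ) 1, ‖F t‖ ≤ MF := by
    intro t ht
    calc ‖F t‖ ≤ c1 * ‖T t‖ := FB t ht
      _ ≤ c1 * R := mul_le_mul_of_nonneg_left (TB t ht) hc1.le
  -- T is MF-Lipschitz on [0,1]
  have TLip : ∀ s ∈ Icc (0:ℝ) 1, ∀ t ∈ Icc (0:ℝ) 1, ‖T t - T s‖ ≤ MF * |t - s| := by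
    intro s hs t ht
    have := Convex.norm_image_sub_le_of_norm_hasDerivWithin_le
      (f := T) (f' := F) (C := MF) hT FMF (convex_Icc 0 1) hs ht
    rwa [Real.norm_eq_abs] at this
  -- local truncation error
  have LTE : ∀ m : ℕ, m < L →
      ‖T (((m+1:ℕ):ℝ)/L) - T ((m:ℝ)/L) - (L:ℝ)⁻¹ • F ((m:ℝ)/L)‖ ≤ A0 * ((L:ℝ)⁻¹)^2 := by
    intro m hm
    set a : ℝ := (m:ℝ)/L with hadef
    set b : ℝ := ((m+1:ℕ):ℝ)/L with hbdef
    have hma : a ∈ Icc (0:ℝ) 1 := tmem m hm.le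
    have hmb : b ∈ Icc (0:ℝ) 1 := tmem (m+1) hm
    have hab : b - a = (L:ℝ)⁻¹ := by
      rw [hbdef, hadef]
      push_cast
      field_simp
      ring
    have haleb : a ≤ b := by
      have : (0:ℝ) ≤ (L:ℝ)⁻¹ := hLinv
      linarith [hab]
    have hsub : Icc a b ⊆ Icc (0:ℝ) 1 := fun x hx =>
      ⟨le_trans hma.1 hx.1, le_trans hx.2 hmb.2⟩
    set G : ℝ → Mat D N := fun t => T t - t • F a with hGdef
    have hG : ∀ t ∈ Icc a b, HasDerivWithinAt G (F t - F a) (Icc a b) t := by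
      intro t htl
      have h1 : HasDerivWithinAt T (F t) (Icc a b) t := (hT t (hsub htl)).mono hsub
      have h2 : HasDerivWithinAt (fun u : ℝ => u • F a) (F a) (Icc a b) t := by
        simpa using ((hasDerivAt_id t).smul_const (F a)).hasDerivWithinAt
      exact h1.sub h2
    have hFbd : ∀ t ∈ Icc a b, ‖F t - F a‖ ≤ A0 * (L:ℝ)⁻¹ := by
      intro t htl
      have ht1 : t ∈ Icc (0:ℝ) 1 := hsub htl
      have hta : |t - a| ≤ (L:ℝ)⁻¹ := by
        rw [abs_of_nonneg (by linarith [htl.1])]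
        linarith [htl.2, hab]
      have split : F t - F a =
          ((∫ β, g (T t) β ∂(ρ t)) - ∫ β, g (T a) β ∂(ρ t)) +
          ((∫ β, g (T a) β ∂(ρ t)) - ∫ β, g (T a) β ∂(ρ a)) := by
        rw [hFdef]; abel
      rw [split]
      have h1 : ‖(∫ β, g (T t) β ∂(ρ t)) - ∫ β, g (T a) β ∂(ρ t)‖ ≤ Lg * (MF * (L:ℝ)⁻¹) := by
        have := integral_g_lip hgdiff hKn hrn hRn hφT.2 hG1 hG3
          (TB t ht1) (TB a hma) (hsupp t ht1)
        refine le_trans this ?_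
        rw [hLgdef]
        have h3 : ‖T t - T a‖ ≤ MF * (L:ℝ)⁻¹ :=
          le_trans (TLip a hma t ht1) (mul_le_mul_of_nonneg_left hta hMFn)
        have h4 : (0:ℝ) ≤ max (φT R) 0 * M := by positivity
        calc max (φT R) 0 * M * ‖T t - T a‖ ≤ max (φT R) 0 * M * (MF * (L:ℝ)⁻¹) :=
              mul_le_mul_of_nonneg_left h3 h4
          _ = max (φT R) 0 * M * (MF * (L:ℝ)⁻¹) := rfl
      have h2 : ‖(∫ β, g (T a) β ∂(ρ t)) - ∫ β, g (T a) β ∂(ρ a)‖ ≤ CBL * (L:ℝ)⁻¹ := by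
        have := integral_g_BL hgdiff hKn hrn hRn hCρ hφP.2 hG1 hG2
          (TB a hma) ρ hsupp hBL hma ht1
        refine le_trans this ?_
        rw [hCBLdef, hSBLdef]
        have hcard : (0:ℝ) ≤ Real.sqrt (Fintype.card (Fin D × Fin (N+1))) := Real.sqrt_nonneg _
        have : Real.sqrt (Fintype.card (Fin D × Fin (N+1))) *
            (max (max (K * R * (1 + r + r^2)) (max (φP R) 0 * (1 + r))) 1 * Cρ) * |t - a|
            ≤ Real.sqrt (Fintype.card (Fin D × Fin (N+1))) *
            (max (max (K * R * (1 + r + r^2)) (max (φP R) 0 * (1 + r))) 1 * Cρ) * (L:ℝ)⁻¹ := by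
          apply mul_le_mul_of_nonneg_left hta
          positivity
        exact this
      calc ‖_ + _‖ ≤ _ := norm_add_le _ _
        _ ≤ Lg * (MF * (L:ℝ)⁻¹) + CBL * (L:ℝ)⁻¹ := add_le_add h1 h2
        _ = A0 * (L:ℝ)⁻¹ := by rw [hA0def]; ring
    have hMV := Convex.norm_image_sub_le_of_norm_hasDerivWithin_le
      (f := G) (f' := fun t => F t - F a) (C := A0 * (L:ℝ)⁻¹) hG hFbd (convex_Icc a b)
      (left_mem_Icc.mpr haleb) (right_mem_Icc.mpr haleb)
    have hGba : G b - G a = T b - T a - (L:ℝ)⁻¹ • F a := by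
      rw [hGdef]
      show T b - b • F a - (T a - a • F a) = _
      rw [← hab, sub_smul]
      abel
    rw [hGba] at hMV
    calc ‖T b - T a - (L:ℝ)⁻¹ • F a‖ ≤ A0 * (L:ℝ)⁻¹ * ‖b - a‖ := hMV
      _ = A0 * ((L:ℝ)⁻¹)^2 := by
          rw [hab, Real.norm_eq_abs, abs_of_nonneg hLinv]; ring
  -- main induction
  have MAIN : ∀ m : ℕ, m ≤ L →
      ‖eulerT g ρ L H m - T ((m:ℝ)/L)‖ ≤
        A0 * ((L:ℝ)⁻¹)^2 * m * (1 + Lg / L) ^ m := by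
    intro m
    induction m with
    | zero =>
      intro _
      simp [eulerT, hT0]
    | succ m ih =>
      intro hm1
      have hm : m ≤ L := le_of_lt (Nat.lt_of_succ_le hm1)
      have ihm := ih hm
      have hma : (m:ℝ)/L ∈ Icc (0:ℝ) 1 := tmem m hm
      set a : ℝ := (m:ℝ)/L with hadef
      set Em : Mat D N := eulerT g ρ L H m with hEmdef
      set Im : Mat D N := ∫ β, g Em β ∂(ρ a) with hImdef
      have hILip : ‖Im - F a‖ ≤ Lg * ‖Em - T a‖ := by
        have := integral_g_lip hgdiff hKn hrn hRn hφT.2 hG1 hG3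
          (E2 m hm) (TB a hma) (hsupp a hma)
        refine le_trans this ?_
        rw [hLgdef]
      have hdecomp : eulerT g ρ L H (m+1) - T (((m+1:ℕ):ℝ)/L) =
          (Em - T a) + (L:ℝ)⁻¹ • (Im - F a)
            - (T (((m+1:ℕ):ℝ)/L) - T a - (L:ℝ)⁻¹ • F a) := by
        show Em + (L:ℝ)⁻¹ • Im - _ = _
        module
      have hnorm : ‖eulerT g ρ L H (m+1) - T (((m+1:ℕ):ℝ)/L)‖ ≤
          ‖Em - T a‖ + (L:ℝ)⁻¹ * (Lg * ‖Em - T a‖) + A0 * ((L:ℝ)⁻¹)^2 := by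
        rw [hdecomp]
        refine le_trans (norm_sub_le _ _) ?_
        have h1 := norm_add_le (Em - T a) ((L:ℝ)⁻¹ • (Im - F a))
        have h2 : ‖(L:ℝ)⁻¹ • (Im - F a)‖ ≤ (L:ℝ)⁻¹ * (Lg * ‖Em - T a‖) := by
          rw [norm_smul, Real.norm_eq_abs, abs_of_nonneg hLinv]
          exact mul_le_mul_of_nonneg_left hILip hLinv
        have h3 := LTE m (Nat.lt_of_succ_le hm1)
        linarith
      have hbase1 : (1:ℝ) ≤ 1 + Lg / L := by
        have := div_nonneg hLgn hLpos.le; linarith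
      have hpow1 : (1:ℝ) ≤ (1 + Lg / L)^(m+1) := one_le_pow₀ hbase1
      have hpowm : (1 + Lg / L)^m ≤ (1 + Lg / L)^(m+1) :=
        pow_le_pow_right₀ hbase1 (Nat.le_succ m)
      have herrn : (0:ℝ) ≤ ‖Em - T a‖ := norm_nonneg _
      have key : ‖Em - T a‖ + (L:ℝ)⁻¹ * (Lg * ‖Em - T a‖) + A0 * ((L:ℝ)⁻¹)^2
          ≤ A0 * ((L:ℝ)⁻¹)^2 * (m+1) * (1 + Lg/L)^(m+1) := by
        have hfac : ‖Em - T a‖ + (L:ℝ)⁻¹ * (Lg * ‖Em - T a‖)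
            = (1 + Lg/L) * ‖Em - T a‖ := by
          rw [div_eq_mul_inv]; ring
        rw [hfac]
        have h5 : (1 + Lg/L) * ‖Em - T a‖ ≤
            (1 + Lg/L) * (A0 * ((L:ℝ)⁻¹)^2 * m * (1 + Lg/L)^m) :=
          mul_le_mul_of_nonneg_left ihm (by linarith)
        have h6 : (1 + Lg/L) * (A0 * ((L:ℝ)⁻¹)^2 * m * (1 + Lg/L)^m)
            = A0 * ((L:ℝ)⁻¹)^2 * m * (1 + Lg/L)^(m+1) := by
          rw [pow_succ]; ring
        have h7 : A0 * ((L:ℝ)⁻¹)^2 * m * (1 + Lg/L)^(m+1) + A0 * ((L:ℝ)⁻¹)^2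
            ≤ A0 * ((L:ℝ)⁻¹)^2 * (m+1) * (1 + Lg/L)^(m+1) := by
          have h8 : (0:ℝ) ≤ A0 * ((L:ℝ)⁻¹)^2 := by positivity
          nlinarith [hpow1]
        linarith [h5, h6.le, h6.ge]
      have := le_trans hnorm key
      push_cast at this ⊢
      exact this
  -- conclude
  have hfinal := MAIN l hlL
  have hpowL : (1 + Lg / L)^l ≤ Real.exp Lg := pow_one_add_div_le_exp hLgn hL hlL
  have hcl : (l:ℝ) ≤ L := by exact_mod_cast hlL
  have h9 : A0 * ((L:ℝ)⁻¹)^2 * l * (1 + Lg/L)^l ≤ A0 * ((L:ℝ)⁻¹)^2 * L * Real.exp Lg := by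
    have h10 : (0:ℝ) ≤ A0 * ((L:ℝ)⁻¹)^2 := by positivity
    have h11 : A0 * ((L:ℝ)⁻¹)^2 * l ≤ A0 * ((L:ℝ)⁻¹)^2 * L :=
      mul_le_mul_of_nonneg_left hcl h10
    have h12 : (0:ℝ) ≤ (1 + Lg/L)^l := by positivity
    nlinarith [Real.exp_pos Lg, mul_le_mul_of_nonneg_left hpowL (mul_nonneg h10 (Nat.cast_nonneg L))]
  have h13 : A0 * ((L:ℝ)⁻¹)^2 * L * Real.exp Lg = A0 * Real.exp Lg * (L:ℝ)⁻¹ := by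
    field_simp
  calc ‖eulerT g ρ L H l - T ((l:ℝ)/L)‖
      ≤ A0 * ((L:ℝ)⁻¹)^2 * l * (1 + Lg/L)^l := hfinal
    _ ≤ A0 * Real.exp Lg * (L:ℝ)⁻¹ := by rw [← h13]; exact h9
    _ ≤ (A0 * Real.exp Lg + 1) / L := by
        rw [div_eq_mul_inv]
        apply mul_le_mul_of_nonneg_right _ hLinv
        linarith [Real.exp_pos Lg]
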